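/- Let $(d_r)_{r\ge1}$ be integers $\ge 2$ and $(p_r)_{r\ge1}$ probabilities in $(0,1]$, with $f_r$, $\tilde f_r$ as usual. If $\lambda \in \mathbb{C}$ satisfies $\tilde f_{r_0}(\lambda) = 1$ for some $r_0 \ge 1$, then $\tilde f_r(\lambda) = 1$ for all $r \ge r_0$; moreover $\lambda$ lies in the boundary of the fibered filled Julia set $\mathcal{E} = \{z : (\tilde f_r(z))_r \text{ bounded}\}$, i.e., $\lambda \in \mathcal{E}$ and every neighborhood of $\lambda$ contains a point not in $\mathcal{E}$. -/

import Mathlib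

/-- The polynomial `f_r(z) = ((z - (1 - p_r))/p_r)^(d_r)`. -/
noncomputable def fr (d : ℕ → ℕ) (p : ℕ → ℝ) (r : ℕ) (z : ℂ) : ℂ :=
  ((z - (1 - (p r : ℂ))) / (p r : ℂ)) ^ (d r)

/-- The composition `f̃_r = f_r ∘ ⋯ ∘ f_1`, with `f̃_0 = id`. -/
noncomputable def ftil (d : ℕ → ℕ) (p : ℕ → ℝ) : ℕ → ℂ → ℂ
  | 0 => fun z => z
  | r + 1 => fun z => fr d p (r + 1) (ftil d p r z)

lemma ftil_analytic (d : ℕ → ℕ) (p : ℕ → ℝ) (r : ℕ) (z : ℂ) :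
    AnalyticAt ℂ (ftil d p r) z := by
  induction r generalizing z with
  | zero => exact analyticAt_id
  | succ r ih =>
    have : ftil d p (r + 1) = fun z =>
        ((ftil d p r z - (1 - (p (r+1) : ℂ))) * ((p (r+1) : ℂ))⁻¹) ^ (d (r+1)) := by
      funext w; simp [ftil, fr, div_eq_mul_inv]
    rw [this]
    exact (((ih z).sub analyticAt_const).mul analyticAt_const).pow _

lemma ftil_surj (d : ℕ → ℕ) (p : ℕ → ℝ)
    (hd : ∀ r, 1 ≤ r → 2 ≤ d r) (hp : ∀ r, 1 ≤ r → 0 < p r ∧ p r ≤ 1) (r : ℕ) :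
    Function.Surjective (ftil d p r) := by
  induction r with
  | zero => exact fun v => ⟨v, rfl⟩
  | succ r ih =>
    intro v
    obtain ⟨x, hx⟩ := IsAlgClosed.exists_pow_nat_eq v
      (n := d (r+1)) (by have := hd (r+1) (by omega); omega)
    have hpr : (p (r+1) : ℂ) ≠ 0 := by
      exact_mod_cast ne_of_gt (hp (r+1) (by omega)).1
    obtain ⟨z, hz⟩ := ih ((1 - (p (r+1) : ℂ)) + (p (r+1) : ℂ) * x)
    refine ⟨z, ?_⟩
    show fr d p (r+1) (ftil d p r z) = v
    rw [hz, fr]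
    rw [add_sub_cancel_left, mul_div_cancel_left₀ _ hpr, hx]

/-- Escape estimate: outside the closed unit disk, each `f_r` at least squares the modulus. -/
lemma escape (d : ℕ → ℕ) (p : ℕ → ℝ)
    (hd : ∀ r, 1 ≤ r → 2 ≤ d r) (hp : ∀ r, 1 ≤ r → 0 < p r ∧ p r ≤ 1)
    (r : ℕ) (hr : 1 ≤ r) (w : ℂ) (hw : 1 < ‖w‖) :
    (‖w‖) ^ 2 ≤ ‖fr d p r w‖ := by
  obtain ⟨hp0, hp1⟩ := hp r hr
  have hd2 := hd r hr
  set t := ‖w‖ with ht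
  have h1 : ‖1 - (p r : ℂ)‖ = 1 - p r := by
    rw [show (1 - (p r : ℂ)) = ((1 - p r : ℝ) : ℂ) by push_cast; ring,
      Complex.norm_real, Real.norm_eq_abs, abs_of_nonneg (by linarith)]
  have h2 : t - (1 - p r) ≤ ‖w - (1 - (p r : ℂ))‖ := by
    have := norm_sub_norm_le w (1 - (p r : ℂ))
    rw [h1] at this; linarith
  have h3 : ‖(w - (1 - (p r : ℂ))) / (p r : ℂ)‖ =
      ‖w - (1 - (p r : ℂ))‖ / p r := by
    rw [norm_div, Complex.norm_real, Real.norm_eq_abs, abs_of_pos hp0]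
  have hbase : t ≤ ‖(w - (1 - (p r : ℂ))) / (p r : ℂ)‖ := by
    rw [h3]
    rw [le_div_iff₀ hp0]
    nlinarith
  have ht1 : (1:ℝ) ≤ t := le_of_lt hw
  calc t ^ 2 ≤ t ^ (d r) := pow_le_pow_right₀ ht1 hd2
    _ ≤ (‖(w - (1 - (p r : ℂ))) / (p r : ℂ)‖) ^ (d r) :=
        pow_le_pow_left₀ (by positivity) hbase _
    _ = ‖fr d p r w‖ := by rw [fr, norm_pow]

/-- If `f̃_{r₀}(λ) = 1` for some `r₀ ≥ 1`, then `f̃_r(λ) = 1` for all `r ≥ r₀`; moreover `λ`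
lies in the boundary of the fibered filled Julia set: the orbit of `λ` is bounded, while
every neighborhood of `λ` contains a point with unbounded orbit. -/
theorem stmt15 (d : ℕ → ℕ) (p : ℕ → ℝ)
    (hd : ∀ r, 1 ≤ r → 2 ≤ d r) (hp : ∀ r, 1 ≤ r → 0 < p r ∧ p r ≤ 1)
    (lam : ℂ) (r0 : ℕ) (hr0 : 1 ≤ r0) (h : ftil d p r0 lam = 1) :
    (∀ r, r0 ≤ r → ftil d p r lam = 1) ∧
    (∃ M : ℝ, ∀ r : ℕ, ‖ftil d p r lam‖ ≤ M) ∧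
    (∀ ε : ℝ, 0 < ε → ∃ z : ℂ, ‖z - lam‖ < ε ∧
      ¬ ∃ M : ℝ, ∀ r : ℕ, ‖ftil d p r z‖ ≤ M) := by
  -- Part 1
  have part1 : ∀ r, r0 ≤ r → ftil d p r lam = 1 := by
    intro r hr
    induction r, hr using Nat.le_induction with
    | base => exact h
    | succ r hr ih =>
      have hpr : (p (r+1) : ℂ) ≠ 0 := by
        exact_mod_cast ne_of_gt (hp (r+1) (by omega)).1
      show fr d p (r+1) (ftil d p r lam) = 1
      rw [ih, fr]
      rw [sub_sub_cancel, div_self hpr, one_pow]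
  refine ⟨part1, ?_, ?_⟩
  · -- Part 2: boundedness
    refine ⟨1 + ∑ r ∈ Finset.range r0, ‖ftil d p r lam‖, fun r => ?_⟩
    rcases le_or_gt r0 r with hr | hr
    · rw [part1 r hr]
      simp only [norm_one]
      have : (0:ℝ) ≤ ∑ r ∈ Finset.range r0, ‖ftil d p r lam‖ :=
        Finset.sum_nonneg fun _ _ => norm_nonneg _
      linarith
    · have : ‖ftil d p r lam‖ ≤
          ∑ s ∈ Finset.range r0, ‖ftil d p s lam‖ :=
        Finset.single_le_sum (f := fun s => ‖ftil d p s lam‖)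
          (fun _ _ => norm_nonneg _) (Finset.mem_range.mpr hr)
      linarith
  · -- Part 3
    intro ε hε
    -- find z in the ball with |ftil r0 z| > 1
    have key : ∃ z : ℂ, ‖z - lam‖ < ε ∧ 1 < ‖ftil d p r0 z‖ := by
      rcases (ftil_analytic d p r0 lam).eventually_constant_or_nhds_le_map_nhds with hc | hm
      · -- constant near lam: contradiction with surjectivity via the identity theorem
        exfalso
        have hent : AnalyticOnNhd ℂ (ftil d p r0) Set.univ := fun z _ => ftil_analytic d p r0 z
        have hconst : AnalyticOnNhd ℂ (fun _ : ℂ => ftil d p r0 lam) Set.univ :=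
          fun z _ => analyticAt_const
        have heq : Set.EqOn (ftil d p r0) (fun _ => ftil d p r0 lam) Set.univ :=
          hent.eqOn_of_preconnected_of_eventuallyEq hconst isPreconnected_univ
            (Set.mem_univ lam) hc
        obtain ⟨z, hz⟩ := ftil_surj d p hd hp r0 0
        have := heq (Set.mem_univ z)
        rw [hz, h] at this
        simp at this
      · -- open mapping: the image of the ball is a neighborhood of 1
        have himg : ftil d p r0 '' Metric.ball lam ε ∈ nhds (ftil d p r0 lam) :=
          hm (Filter.image_mem_map (Metric.ball_mem_nhds lam hε))
        rw [h] at himg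
        obtain ⟨δ, hδ, hball⟩ := Metric.mem_nhds_iff.mp himg
        have hw : (1 + (δ/2 : ℝ) : ℂ) ∈ Metric.ball (1:ℂ) δ := by
          simp [Metric.mem_ball, Complex.dist_eq]
          rw [abs_of_pos hδ]; linarith
        obtain ⟨z, hz, hzv⟩ := hball hw
        refine ⟨z, by rwa [← Complex.dist_eq, ← Metric.mem_ball], ?_⟩
        rw [hzv]
        rw [show (1 + (δ/2 : ℝ) : ℂ) = ((1 + δ/2 : ℝ) : ℂ) by push_cast; ring,
          Complex.norm_real, Real.norm_eq_abs, abs_of_pos (by linarith)]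
        linarith
    obtain ⟨z, hz, hz1⟩ := key
    refine ⟨z, hz, ?_⟩
    rintro ⟨M, hM⟩
    set t := ‖ftil d p r0 z‖ with ht
    -- growth: |ftil (r0+k) z| ≥ t^(k+1)
    have grow : ∀ k : ℕ, t ^ (k + 1) ≤ ‖ftil d p (r0 + k) z‖ := by
      intro k
      induction k with
      | zero => simp [ht]
      | succ k ih =>
        have hgt1 : 1 < ‖ftil d p (r0 + k) z‖ :=
          lt_of_lt_of_le (one_lt_pow₀ hz1 (by omega)) ih
        have hstep := escape d p hd hp (r0 + k + 1) (by omega) _ hgt1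
        have : ftil d p (r0 + (k + 1)) z = fr d p (r0 + k + 1) (ftil d p (r0 + k) z) := rfl
        rw [this]
        calc t ^ (k + 2) ≤ (t ^ (k+1)) ^ 2 := by
              rw [← pow_mul]
              exact pow_le_pow_right₀ (le_of_lt hz1) (by omega)
          _ ≤ (‖ftil d p (r0 + k) z‖) ^ 2 :=
              pow_le_pow_left₀ (by positivity) ih _
          _ ≤ _ := hstep
    obtain ⟨n, hn⟩ := pow_unbounded_of_one_lt M hz1
    have := hM (r0 + n)
    have h2 := grow n
    have h3 : t ^ n ≤ t ^ (n + 1) := pow_le_pow_right₀ (le_of_lt hz1) (by omega)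
    linarith
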